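/- arXiv:2602.20753 — 4 statements merged into one kernel-verified Lean document; each statement's English description precedes it below -/
import Mathlib

section
/- Let A ∈ M_{2n}(ℝ) be positive definite and suppose Wᵀ A W = D ⊕ D, where W is symplectic and D = diag(δ₁,…,δ_n) with δ_j > 0 (Williamson's theorem). Then the complex eigenvalues of J_{2n} A are exactly ± i δ₁, …, ± i δ_n; in particular, the moduli of the eigenvalues of J_{2n} A are the symplectic eigenvalues δ₁, …, δ_n of A. -/
open Matrix Finset

noncomputable section

section helperlemmas
open Polynomial

lemma charpoly_conj' {m R : Type*} [Fintype m] [DecidableEq m] [CommRing R]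
    (P M : Matrix m m R) (h : IsUnit P.det) :
    (P * M * P⁻¹).charpoly = M.charpoly := by
  have h1 : P * P⁻¹ = 1 := mul_nonsing_inv P h
  have hcomm : Commute (Matrix.scalar m (X : R[X])) ((C : R →+* R[X]).mapMatrix P) :=
    Matrix.scalar_commute _ (fun r' => Commute.all _ _) _
  have key : charmatrix (P * M * P⁻¹)
      = (C : R →+* R[X]).mapMatrix P * charmatrix M * (C : R →+* R[X]).mapMatrix P⁻¹ := by
    unfold charmatrix
    rw [Matrix.mul_sub, Matrix.sub_mul, ← hcomm.eq]
    rw [Matrix.mul_assoc (Matrix.scalar m X), ← _root_.map_mul, h1, _root_.map_one, Matrix.mul_one]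
    rw [_root_.map_mul, _root_.map_mul, Matrix.mul_assoc]
  have hdet1 : ((C : R →+* R[X]).mapMatrix P).det * ((C : R →+* R[X]).mapMatrix P⁻¹).det = 1 := by
    rw [← det_mul, ← _root_.map_mul, h1, _root_.map_one, det_one]
  rw [Matrix.charpoly, key, det_mul, det_mul, mul_comm, ← mul_assoc,
    mul_comm _ (((C : R →+* R[X]).mapMatrix P).det), hdet1, one_mul]
  rfl

lemma charpoly_diagonal' {m R : Type*} [Fintype m] [DecidableEq m] [CommRing R] (d : m → R) :
    (Matrix.diagonal d).charpoly = ∏ i, (X - C (d i)) := by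
  have : charmatrix (Matrix.diagonal d) = Matrix.diagonal (fun i => X - C (d i)) := by
    ext i j
    by_cases hij : i = j
    · subst hij; simp
    · simp [hij, Matrix.diagonal_apply_ne _ hij]
  rw [Matrix.charpoly, this, det_diagonal]

lemma charpoly_diagonal_roots {m : Type*} [Fintype m] [DecidableEq m] (d : m → ℂ) :
    (Matrix.diagonal d).charpoly.roots = Finset.univ.val.map d := by
  rw [charpoly_diagonal']
  have : ∏ i, (X - C (d i)) = (Multiset.map (fun a => X - C a) (Finset.univ.val.map d)).prod := by
    rw [Multiset.map_map]; rfl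
  rw [this, Polynomial.roots_multiset_prod_X_sub_C]

end helperlemmas

/-- The standard symplectic form matrix over index type `ι ⊕ ι`. -/
def Jm (ι : Type*) [DecidableEq ι] : Matrix (ι ⊕ ι) (ι ⊕ ι) ℝ :=
  Matrix.fromBlocks 0 1 (-1) 0

/-- `W` is symplectic if `Wᵀ J W = J`. -/
def IsSymplectic {ι : Type*} [Fintype ι] [DecidableEq ι] (W : Matrix (ι ⊕ ι) (ι ⊕ ι) ℝ) : Prop :=
  Wᵀ * Jm ι * W = Jm ι

/-- Multiset of moduli of the complex eigenvalues of `J * A`; each symplectic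
eigenvalue of `A` occurs twice in this multiset. -/
def sympModuli {ι : Type*} [Fintype ι] [DecidableEq ι] (A : Matrix (ι ⊕ ι) (ι ⊕ ι) ℝ) :
    Multiset ℝ :=
  (((Jm ι * A).map (Complex.ofReal ·)).charpoly.roots).map (fun z : ℂ => ‖z‖)

theorem eigenvalues_JA {n : ℕ} (A W : Matrix (Fin n ⊕ Fin n) (Fin n ⊕ Fin n) ℝ)
    (δ : Fin n → ℝ) (hA : A.PosDef) (hδ : ∀ j, 0 < δ j) (hW : IsSymplectic W)
    (hWAW : Wᵀ * A * W =
      Matrix.fromBlocks (Matrix.diagonal δ) 0 0 (Matrix.diagonal δ)) :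
    ((Jm (Fin n) * A).map (Complex.ofReal ·)).charpoly.roots =
        (Finset.univ.val.map fun j => (δ j : ℂ) * Complex.I) +
        (Finset.univ.val.map fun j => -((δ j : ℂ) * Complex.I)) ∧
    sympModuli A = (Finset.univ.val.map δ) + (Finset.univ.val.map δ) := by
  set D2 : Matrix (Fin n ⊕ Fin n) (Fin n ⊕ Fin n) ℝ :=
    Matrix.fromBlocks (Matrix.diagonal δ) 0 0 (Matrix.diagonal δ) with hD2
  -- Jm is minus mathlib's J
  have hJm : Jm (Fin n) = -(Matrix.J (Fin n) ℝ) := by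
    rw [Jm, Matrix.J, Matrix.fromBlocks_neg]
    norm_num
  have hmem : W ∈ Matrix.symplecticGroup (Fin n) ℝ := by
    rw [SymplecticGroup.mem_iff']
    have h := hW
    rw [IsSymplectic, hJm] at h
    simp only [Matrix.mul_neg, Matrix.neg_mul, neg_inj] at h
    exact h
  have hdet : IsUnit W.det := SymplecticGroup.symplectic_det hmem
  have hdetT : IsUnit Wᵀ.det := by rwa [Matrix.det_transpose]
  have hWJW : W * Jm (Fin n) * Wᵀ = Jm (Fin n) := by
    have h := SymplecticGroup.mem_iff.mp hmem
    rw [hJm]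
    simp only [Matrix.mul_neg, Matrix.neg_mul, neg_inj]
    exact h
  have hA' : A = Wᵀ⁻¹ * D2 * W⁻¹ := by
    rw [← hWAW]
    rw [Matrix.mul_assoc Wᵀ, Matrix.nonsing_inv_mul_cancel_left _ _ hdetT,
      Matrix.mul_nonsing_inv_cancel_right _ _ hdet]
  have hWJ : W * Jm (Fin n) = Jm (Fin n) * Wᵀ⁻¹ := by
    have h2 := congrArg (fun M => M * Wᵀ⁻¹) hWJW
    simpa [Matrix.mul_nonsing_inv_cancel_right _ _ hdetT] using h2
  have key : Jm (Fin n) * A = W * (Jm (Fin n) * D2) * W⁻¹ := by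
    rw [hA']
    simp only [← Matrix.mul_assoc]
    rw [hWJ]
  have hchar : (Jm (Fin n) * A).charpoly = (Jm (Fin n) * D2).charpoly := by
    rw [key]; exact charpoly_conj' _ _ hdet
  -- pass to ℂ
  set δc : Fin n → ℂ := fun j => (δ j : ℂ) with hδc
  set d : Fin n ⊕ Fin n → ℂ :=
    Sum.elim (fun j => δc j * Complex.I) (fun j => -(δc j * Complex.I)) with hd
  set Mc : Matrix (Fin n ⊕ Fin n) (Fin n ⊕ Fin n) ℂ :=
    Matrix.fromBlocks 0 (Matrix.diagonal δc) (-(Matrix.diagonal δc)) 0 with hMc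
  have hmap : ∀ M : Matrix (Fin n ⊕ Fin n) (Fin n ⊕ Fin n) ℝ,
      M.map (Complex.ofReal ·) = M.map Complex.ofRealHom := fun _ => rfl
  have hJD : (Jm (Fin n) * D2).map Complex.ofRealHom = Mc := by
    rw [Jm, hD2, Matrix.fromBlocks_multiply, hMc]
    simp [Matrix.fromBlocks_map, Matrix.diagonal_map]
    exact fun _ => rfl
  set P : Matrix (Fin n ⊕ Fin n) (Fin n ⊕ Fin n) ℂ :=
    Matrix.fromBlocks 1 1 (Complex.I • 1) (-(Complex.I • 1)) with hP
  set Q : Matrix (Fin n ⊕ Fin n) (Fin n ⊕ Fin n) ℂ :=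
    Matrix.fromBlocks ((2:ℂ)⁻¹ • 1) ((-(Complex.I/2)) • 1)
      ((2:ℂ)⁻¹ • 1) ((Complex.I/2) • 1) with hQ
  have hPQ : P * Q = 1 := by
    rw [hP, hQ, Matrix.fromBlocks_multiply, ← Matrix.fromBlocks_one, Matrix.fromBlocks_inj]
    refine ⟨?_, ?_, ?_, ?_⟩ <;>
    · simp only [Matrix.smul_mul, Matrix.mul_smul, Matrix.one_mul, Matrix.mul_one,
        Matrix.neg_mul, Matrix.mul_neg, Matrix.add_mul, Matrix.mul_add, Matrix.zero_mul,
        Matrix.mul_zero, add_zero, zero_add, smul_smul, smul_neg, neg_smul, neg_neg,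
        smul_zero, zero_smul]
      match_scalars <;> (ring_nf; try simp [Complex.I_sq])
  have hPdet : IsUnit P.det :=
    IsUnit.of_mul_eq_one Q.det (by rw [← Matrix.det_mul, hPQ, Matrix.det_one])
  have hPinv : P⁻¹ = Q := Matrix.inv_eq_right_inv hPQ
  have hconj : Mc = P * Matrix.diagonal d * Q := by
    rw [hd, ← Matrix.fromBlocks_diagonal, hP, hQ, Matrix.fromBlocks_multiply,
      Matrix.fromBlocks_multiply, hMc]
    have hneg : Matrix.diagonal (fun j => -(δc j * Complex.I))
        = -(Matrix.diagonal fun j => δc j * Complex.I) := (Matrix.diagonal_neg _).symm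
    have hsc : Matrix.diagonal δc
        = (-Complex.I) • Matrix.diagonal (fun j => δc j * Complex.I) := by
      rw [← Matrix.diagonal_smul]
      refine congrArg Matrix.diagonal ?_
      funext j
      simp only [Pi.smul_apply, smul_eq_mul]
      ring_nf
      simp [Complex.I_sq]
    rw [hneg, hsc, Matrix.fromBlocks_inj]
    refine ⟨?_, ?_, ?_, ?_⟩ <;>
    · simp only [Matrix.smul_mul, Matrix.mul_smul, Matrix.one_mul, Matrix.mul_one,
        Matrix.neg_mul, Matrix.mul_neg, Matrix.zero_mul, Matrix.mul_zero, smul_smul,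
        smul_neg, neg_smul, add_zero, zero_add, neg_neg]
      match_scalars <;> (ring_nf; try simp [Complex.I_sq])
  have hcharMc : Mc.charpoly = (Matrix.diagonal d).charpoly := by
    rw [hconj, ← hPinv]
    exact charpoly_conj' _ _ hPdet
  have part1 : ((Jm (Fin n) * A).map (Complex.ofReal ·)).charpoly.roots =
      (Finset.univ.val.map fun j => (δ j : ℂ) * Complex.I) +
      (Finset.univ.val.map fun j => -((δ j : ℂ) * Complex.I)) := by
    rw [hmap, Matrix.charpoly_map, hchar, ← Matrix.charpoly_map _ Complex.ofRealHom, hJD,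
      hcharMc, charpoly_diagonal_roots]
    rw [← Finset.univ_disjSum_univ, Finset.val_disjSum, Multiset.disjSum,
      Multiset.map_add, Multiset.map_map, Multiset.map_map]
    rfl
  refine ⟨part1, ?_⟩
  rw [sympModuli, part1, Multiset.map_add, Multiset.map_map, Multiset.map_map]
  congr 1
  · refine Multiset.map_congr rfl fun j _ => ?_
    simp [Function.comp, _root_.map_mul, AbsoluteValue.map_neg, Complex.norm_real,
      Complex.norm_I, abs_of_pos (hδ j)]
  · refine Multiset.map_congr rfl fun j _ => ?_
    simp [Function.comp, _root_.map_mul, AbsoluteValue.map_neg, Complex.norm_real,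
      Complex.norm_I, abs_of_pos (hδ j)]
end
end

section
/- For every generalized mean M and every r ≥ 1, there exist real numbers p, q, u, v with ps − qu = 1 (i.e., an element of SL(2,ℝ)) such that M(p² + q², u² + s²) = r. Equivalently, the image of SL(2,ℝ) under the map [[p,q],[u,s]] ↦ M(p²+q², u²+s²) contains [1, ∞). -/
open Matrix Finset

noncomputable section

/-- A generalized mean: positive, continuous on `(0,∞)²`, symmetric, positively
homogeneous, monotone in each argument, and between its arguments. -/
structure IsGenMean (M : ℝ → ℝ → ℝ) : Prop where
  pos : ∀ a b : ℝ, 0 < a → 0 < b → 0 < M a b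
  cont : ContinuousOn (fun p : ℝ × ℝ => M p.1 p.2) (Set.Ioi (0:ℝ) ×ˢ Set.Ioi (0:ℝ))
  symm : ∀ a b : ℝ, 0 < a → 0 < b → M a b = M b a
  homog : ∀ a b r : ℝ, 0 < a → 0 < b → 0 < r → M (r * a) (r * b) = r * M a b
  mono : ∀ a a' b b' : ℝ, 0 < a → 0 < b → a ≤ a' → b ≤ b' → M a b ≤ M a' b'
  between : ∀ a b : ℝ, 0 < a → a ≤ b → a ≤ M a b ∧ M a b ≤ b

/-- `x` is weakly supermajorized by `y` (`x ≺^w y`): for every `k`, the sum of the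
`k` smallest entries of `x` is at least the sum of the `k` smallest entries of `y`. -/
def SupermajW {n : ℕ} (x y : Fin n → ℝ) : Prop :=
  ∀ k : ℕ, k ≤ n →
    ∑ j ∈ Finset.univ.filter (fun j : Fin n => (j : ℕ) < k), y (Tuple.sort y j) ≤
    ∑ j ∈ Finset.univ.filter (fun j : Fin n => (j : ℕ) < k), x (Tuple.sort x j)

theorem mean_SL2_surjective_onto_Ici_one (M : ℝ → ℝ → ℝ) (hM : IsGenMean M)
    (r : ℝ) (hr : 1 ≤ r) :
    ∃ p q u s : ℝ, p * s - q * u = 1 ∧ M (p ^ 2 + q ^ 2) (u ^ 2 + s ^ 2) = r := by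
  set T := Real.sqrt (r + 1) with hT
  have hr1 : (0:ℝ) ≤ r + 1 := by linarith
  have hT2 : T ^ 2 = r + 1 := Real.sq_sqrt hr1
  have hT1 : 1 ≤ T := by nlinarith [Real.sqrt_nonneg (r + 1)]
  set f : ℝ → ℝ := fun t => M (t ^ 2) (t ^ 2 - 1 + t⁻¹ ^ 2) with hf
  have hb1 : ∀ t : ℝ, 1 ≤ t → 1 ≤ t ^ 2 - 1 + t⁻¹ ^ 2 := by
    intro t ht
    have ht0 : t ≠ 0 := by positivity
    nlinarith [sq_nonneg (t - t⁻¹), mul_inv_cancel₀ ht0]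
  have hble : ∀ t : ℝ, 1 ≤ t → t ^ 2 - 1 + t⁻¹ ^ 2 ≤ t ^ 2 := by
    intro t ht
    have h1 : t⁻¹ ≤ 1 := by
      rw [inv_le_one_iff₀]; right; exact ht
    have h0 : 0 ≤ t⁻¹ := by positivity
    nlinarith
  have hcont : ContinuousOn f (Set.Icc 1 T) := by
    have hinner : ContinuousOn (fun t : ℝ => ((t ^ 2, t ^ 2 - 1 + t⁻¹ ^ 2) : ℝ × ℝ))
        (Set.Icc 1 T) := by
      apply ContinuousOn.prodMk
      · exact (continuousOn_id.pow 2)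
      · exact (((continuousOn_id.pow 2).sub continuousOn_const).add
          ((continuousOn_id.inv₀ (fun t ht => by
            have : (1:ℝ) ≤ t := ht.1; positivity)).pow 2))
    exact hM.cont.comp hinner (fun t ht => by
      constructor
      · have : (1:ℝ) ≤ t := ht.1
        simp only [Set.mem_Ioi]; positivity
      · have := hb1 t ht.1
        simp only [Set.mem_Ioi]; linarith)
  have hf1 : f 1 = 1 := by
    have h := hM.between 1 1 one_pos le_rfl
    have : f 1 = M 1 1 := by norm_num [hf]
    rw [this]; linarith [h.1, h.2]
  have hfT : r ≤ f T := by
    have hbpos : (0:ℝ) < T ^ 2 - 1 + T⁻¹ ^ 2 := by linarith [hb1 T hT1]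
    have hT0 : (0:ℝ) < T ^ 2 := by positivity
    have hsymm := hM.symm (T ^ 2) (T ^ 2 - 1 + T⁻¹ ^ 2) hT0 hbpos
    have hbet := hM.between (T ^ 2 - 1 + T⁻¹ ^ 2) (T ^ 2) hbpos (hble T hT1)
    have hinv : (0:ℝ) ≤ T⁻¹ ^ 2 := by positivity
    have : f T = M (T ^ 2 - 1 + T⁻¹ ^ 2) (T ^ 2) := hsymm
    rw [this]
    calc r = (r + 1) - 1 := by ring
    _ ≤ T ^ 2 - 1 + T⁻¹ ^ 2 := by rw [hT2] at *; linarith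
    _ ≤ _ := hbet.1
  have hr_mem : r ∈ Set.Icc (f 1) (f T) := ⟨by rw [hf1]; exact hr, hfT⟩
  obtain ⟨t, ht, hft⟩ := intermediate_value_Icc hT1 hcont hr_mem
  have ht1 : (1:ℝ) ≤ t := ht.1
  have ht0 : t ≠ 0 := by positivity
  refine ⟨t, 0, Real.sqrt (t ^ 2 - 1), t⁻¹, ?_, ?_⟩
  · field_simp; ring
  · have hsq : Real.sqrt (t ^ 2 - 1) ^ 2 = t ^ 2 - 1 := Real.sq_sqrt (by nlinarith)
    rw [hsq]
    calc M (t ^ 2 + 0 ^ 2) (t ^ 2 - 1 + t⁻¹ ^ 2)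
        = M (t ^ 2) (t ^ 2 - 1 + t⁻¹ ^ 2) := by norm_num
    _ = r := hft
end
end

section
/- Let M be a generalized mean. The following are equivalent: (i) for all positive definite A = [a_{ij}] ∈ M_{2n}(ℝ), the vector (M(a_{jj}, a_{n+j,n+j}))_{j=1}^n is weakly supermajorized by the vector of symplectic eigenvalues of A; (ii) for all positive definite A ∈ M_{2n}(ℝ) with increasingly sorted symplectic eigenvalues δ₁ ≤ … ≤ δ_n and all k = 1,…,n, δ₁ + … + δ_k equals the minimum of Σ_{j=1}^k M(b_{jj}, b_{k+j,k+j}) over all matrices B = [b_{ij}] = Xᵀ A X where X ∈ M_{2n,2k}(ℝ) satisfies Xᵀ J_{2n} X = J_{2k}. -/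
open Matrix Finset
set_option linter.unusedSectionVars false
set_option maxHeartbeats 1000000

noncomputable section

section Aux

variable {ι κ κ' : Type*} [Fintype ι] [DecidableEq ι] [Fintype κ] [DecidableEq κ]

lemma Jm_transpose : (Jm ι)ᵀ = -Jm ι := by
  ext (i|i) (j|j) <;> simp [Jm, Matrix.fromBlocks, Matrix.one_apply, eq_comm]

lemma Jm_mul_Jm : Jm ι * Jm ι = -1 := by
  rw [Jm, Matrix.fromBlocks_multiply]
  ext (i|i) (j|j) <;>
    simp [Matrix.fromBlocks, Matrix.one_apply]

lemma Jm_mul_transpose : Jm ι * (Jm ι)ᵀ = 1 := by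
  rw [Jm_transpose, Matrix.mul_neg, Jm_mul_Jm]; simp

lemma transpose_mul_Jm : (Jm ι)ᵀ * Jm ι = 1 := by
  rw [Jm_transpose, Matrix.neg_mul, Jm_mul_Jm]; simp

lemma gram_apply [Fintype κ'] (P : Matrix ι κ ℝ) (B : Matrix ι ι ℝ) (Q : Matrix ι κ' ℝ)
    (c : κ) (d : κ') :
    (Pᵀ * B * Q) c d = (fun i => P i c) ⬝ᵥ (B *ᵥ fun j => Q j d) := by
  simp only [mul_apply, transpose_apply, dotProduct, mulVec, Finset.sum_mul, Finset.mul_sum]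
  rw [Finset.sum_comm]
  exact Finset.sum_congr rfl fun i _ => Finset.sum_congr rfl fun j _ => by ring

lemma omega_skew (u v : ι ⊕ ι → ℝ) : u ⬝ᵥ (Jm ι *ᵥ v) = -(v ⬝ᵥ (Jm ι *ᵥ u)) := by
  rw [Matrix.dotProduct_mulVec]
  have : u ᵥ* Jm ι = (Jm ι)ᵀ *ᵥ u := by rw [← Matrix.vecMul_transpose, Matrix.transpose_transpose]
  rw [this, Jm_transpose, Matrix.neg_mulVec, neg_dotProduct, dotProduct_comm]

lemma omega_self (u : ι ⊕ ι → ℝ) : u ⬝ᵥ (Jm ι *ᵥ u) = 0 := by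
  have := omega_skew (ι := ι) u u; linarith

lemma symplectic_left_inv {S : Matrix (ι ⊕ ι) (ι ⊕ ι) ℝ} (hS : IsSymplectic S) :
    (-(Jm ι) * Sᵀ * Jm ι) * S = 1 := by
  have : (-(Jm ι) * Sᵀ * Jm ι) * S = -(Jm ι) * (Sᵀ * Jm ι * S) := by
    simp only [Matrix.mul_assoc]
  rw [this, hS, Matrix.neg_mul, Jm_mul_Jm, neg_neg]

lemma symplectic_inv {S : Matrix (ι ⊕ ι) (ι ⊕ ι) ℝ} (hS : IsSymplectic S) :
    ∃ L : Matrix (ι ⊕ ι) (ι ⊕ ι) ℝ, L * S = 1 ∧ S * L = 1 ∧ IsSymplectic L := by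
  refine ⟨-(Jm ι) * Sᵀ * Jm ι, symplectic_left_inv hS, ?_, ?_⟩
  · rw [mul_eq_one_comm]; exact symplectic_left_inv hS
  · have h1 : S * (-(Jm ι) * Sᵀ * Jm ι) = 1 := by
      rw [mul_eq_one_comm]; exact symplectic_left_inv hS
    unfold IsSymplectic
    calc (-(Jm ι) * Sᵀ * Jm ι)ᵀ * Jm ι * (-(Jm ι) * Sᵀ * Jm ι)
        = (-(Jm ι) * Sᵀ * Jm ι)ᵀ * (Sᵀ * Jm ι * S) * (-(Jm ι) * Sᵀ * Jm ι) := by rw [hS]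
      _ = (S * (-(Jm ι) * Sᵀ * Jm ι))ᵀ * Jm ι * (S * (-(Jm ι) * Sᵀ * Jm ι)) := by
          simp only [Matrix.transpose_mul, Matrix.transpose_transpose, Matrix.mul_assoc]
      _ = Jm ι := by rw [h1]; simp

lemma symplectic_mul {S T : Matrix (ι ⊕ ι) (ι ⊕ ι) ℝ} (hS : IsSymplectic S)
    (hT : IsSymplectic T) : IsSymplectic (S * T) := by
  unfold IsSymplectic at *
  calc (S * T)ᵀ * Jm ι * (S * T) = Tᵀ * (Sᵀ * Jm ι * S) * T := by
        simp only [Matrix.transpose_mul, Matrix.mul_assoc]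
    _ = Jm ι := by rw [hS, hT]

lemma posDef_conj {A S : Matrix (ι ⊕ ι) (ι ⊕ ι) ℝ} (hA : A.PosDef)
    (hS : ∀ x : ι ⊕ ι → ℝ, S *ᵥ x = 0 → x = 0) : (Sᵀ * A * S).PosDef := by
  have hherm : ∀ B : Matrix (ι ⊕ ι) (ι ⊕ ι) ℝ, Bᴴ = Bᵀ := fun B => by
    ext i j; simp [Matrix.conjTranspose_apply]
  rw [posDef_iff_dotProduct_mulVec]
  constructor
  · show (Sᵀ * A * S)ᴴ = _
    rw [hherm]
    simp only [Matrix.transpose_mul, Matrix.transpose_transpose]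
    have : Aᵀ = A := by rw [← hherm]; exact hA.1
    rw [this, Matrix.mul_assoc]
  · intro x hx
    have hx' : S *ᵥ x ≠ 0 := fun h => hx (hS x h)
    have := hA.dotProduct_mulVec_pos hx'
    have hstar : ∀ y : ι ⊕ ι → ℝ, star y = y := fun y => rfl
    rw [hstar] at this ⊢
    rw [← Matrix.mulVec_mulVec, ← Matrix.mulVec_mulVec, Matrix.dotProduct_mulVec,
      Matrix.vecMul_transpose]
    exact this

def selMat {n k : ℕ} (φ : Fin k → Fin n) : Matrix (Fin n ⊕ Fin n) (Fin k ⊕ Fin k) ℝ :=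
  fun i c => if i = Sum.map φ φ c then 1 else 0

lemma selMat_gram {n k : ℕ} (φ : Fin k → Fin n) (B : Matrix (Fin n ⊕ Fin n) (Fin n ⊕ Fin n) ℝ)
    (c d : Fin k ⊕ Fin k) :
    ((selMat φ)ᵀ * B * selMat φ) c d = B (Sum.map φ φ c) (Sum.map φ φ d) := by
  rw [_root_.gram_apply]
  simp [selMat, dotProduct, mulVec, ite_mul, mul_ite]

lemma selMat_J {n k : ℕ} {φ : Fin k → Fin n} (hφ : Function.Injective φ) :
    (selMat φ)ᵀ * Jm (Fin n) * selMat φ = Jm (Fin k) := by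
  ext c d
  rw [selMat_gram]
  rcases c with c | c <;> rcases d with d | d <;>
    simp [Jm, Matrix.fromBlocks, Matrix.one_apply, hφ.eq_iff]

lemma sum_filter_lt {M : Type*} [AddCommMonoid M] {n k : ℕ} (h : k ≤ n) (f : Fin n → M) :
    ∑ j ∈ Finset.univ.filter (fun j : Fin n => (j : ℕ) < k), f j
      = ∑ j : Fin k, f (Fin.castLE h j) := by
  have hset : Finset.univ.filter (fun j : Fin n => (j : ℕ) < k)
      = (Finset.univ : Finset (Fin k)).map ⟨Fin.castLE h, Fin.castLE_injective h⟩ := by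
    ext j
    simp only [Finset.mem_filter, Finset.mem_univ, true_and, Finset.mem_map,
      Function.Embedding.coeFn_mk]
    constructor
    · intro hj; exact ⟨⟨(j : ℕ), hj⟩, by ext; simp⟩
    · rintro ⟨a, rfl⟩; exact a.2
  rw [hset, Finset.sum_map]
  rfl

lemma card_filter_lt {n k : ℕ} (h : k ≤ n) :
    (Finset.univ.filter (fun j : Fin n => (j : ℕ) < k)).card = k := by
  rw [Finset.card_eq_sum_ones, sum_filter_lt h (fun _ => 1)]
  simp

lemma strictMono_le_apply {k n : ℕ} {f : Fin k → Fin n} (hf : StrictMono f) :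
    ∀ i : Fin k, (i : ℕ) ≤ (f i : ℕ) := by
  intro ⟨iv, hi⟩
  induction iv with
  | zero => simp
  | succ m ih =>
      have h1 : m < k := Nat.lt_of_succ_lt hi
      have h2 : (⟨m, h1⟩ : Fin k) < ⟨m + 1, hi⟩ := by simp [Fin.lt_def]
      have h3 := Fin.lt_def.mp (hf h2)
      have h4 := ih h1
      simp only [Fin.val_mk] at h3 h4 ⊢
      omega

lemma sum_smallest_le {n k : ℕ} (x : Fin n → ℝ) (T : Finset (Fin n)) (hT : T.card = k)
    (hk : k ≤ n) :
    ∑ j ∈ Finset.univ.filter (fun j : Fin n => (j : ℕ) < k), x (Tuple.sort x j)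
      ≤ ∑ t ∈ T, x t := by
  set σ := Tuple.sort x with hσ
  set U : Finset (Fin n) := T.map σ.symm.toEmbedding with hU
  have hUcard : U.card = k := by simp [hU, hT]
  have h1 : ∑ t ∈ T, x t = ∑ i ∈ U, x (σ i) := by
    rw [hU, Finset.sum_map]
    exact Finset.sum_congr rfl fun a _ => by simp
  have e := U.orderIsoOfFin hUcard
  have hmono : Monotone (x ∘ σ) := Tuple.monotone_sort x
  have hsm : StrictMono (fun i : Fin k => ((U.orderIsoOfFin hUcard i) : Fin n)) :=
    fun i j hij => by
      exact (U.orderIsoOfFin hUcard).strictMono hij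
  have h2 : ∑ i ∈ U, x (σ i) = ∑ i : Fin k, x (σ ((U.orderIsoOfFin hUcard i) : Fin n)) := by
    rw [← Finset.sum_attach U (fun i => x (σ i))]
    exact (Equiv.sum_comp (U.orderIsoOfFin hUcard).toEquiv (fun a => x (σ (a : Fin n)))).symm
  rw [h1, h2, sum_filter_lt hk]
  apply Finset.sum_le_sum
  intro i _
  apply hmono
  rw [Fin.le_def]
  simpa using strictMono_le_apply hsm i

lemma sorted_eq_of_monotone {n : ℕ} {δ : Fin n → ℝ} (hδ : Monotone δ) (j : Fin n) :
    δ (Tuple.sort δ j) = δ j := by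
  rw [Tuple.sort_eq_refl_iff_monotone.mpr hδ]
  rfl

lemma col_dot {n k : ℕ} (X : Matrix (Fin n ⊕ Fin n) (Fin k ⊕ Fin k) ℝ)
    (y : Fin n ⊕ Fin n → ℝ) (c : Fin k ⊕ Fin k) :
    (fun i => X i c) ⬝ᵥ y = (Xᵀ *ᵥ y) c := by
  simp [Matrix.mulVec, dotProduct, Matrix.transpose_apply, mul_comm]

lemma completion_step {n k : ℕ} (hk : k < n)
    (X : Matrix (Fin n ⊕ Fin n) (Fin k ⊕ Fin k) ℝ)
    (hX : Xᵀ * Jm (Fin n) * X = Jm (Fin k)) :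
    ∃ X' : Matrix (Fin n ⊕ Fin n) (Fin (k+1) ⊕ Fin (k+1)) ℝ,
      X'ᵀ * Jm (Fin n) * X' = Jm (Fin (k+1)) ∧
      ∀ i c, X' i (Sum.map Fin.castSucc Fin.castSucc c) = X i c := by
  set Jn := Jm (Fin n) with hJn
  -- existence of nonzero u in kernel of Xᵀ Jn
  have hker : ∃ u : Fin n ⊕ Fin n → ℝ, u ≠ 0 ∧ (Xᵀ * Jn) *ᵥ u = 0 := by
    by_contra hcon
    push_neg at hcon
    have hinj : Function.Injective ((Xᵀ * Jn).mulVecLin) := by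
      rw [← LinearMap.ker_eq_bot, LinearMap.ker_eq_bot']
      intro m hm
      by_contra hm0
      exact hcon m hm0 hm
    have hle := LinearMap.finrank_le_finrank_of_injective hinj
    simp only [Module.finrank_pi, Fintype.card_sum, Fintype.card_fin] at hle
    omega
  obtain ⟨u, hu0, hu⟩ := hker
  -- every vector in the kernel pairs to zero with columns of X
  have hcol : ∀ w : Fin n ⊕ Fin n → ℝ, (Xᵀ * Jn) *ᵥ w = 0 →
      ∀ c, (fun i => X i c) ⬝ᵥ (Jn *ᵥ w) = 0 := by
    intro w hw c
    rw [col_dot, Matrix.mulVec_mulVec, hw]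
    simp
  -- existence of a kernel vector pairing nontrivially with u
  have hv0 : ∃ v0 : Fin n ⊕ Fin n → ℝ, (Xᵀ * Jn) *ᵥ v0 = 0 ∧ u ⬝ᵥ (Jn *ᵥ v0) ≠ 0 := by
    by_contra hcon
    push_neg at hcon
    have hall : ∀ w : Fin n ⊕ Fin n → ℝ, u ⬝ᵥ (Jn *ᵥ w) = 0 := by
      intro w
      set Z := X * ((Jm (Fin k))ᵀ * (Xᵀ * Jn)) with hZ
      have hZker : (Xᵀ * Jn) *ᵥ (w - Z *ᵥ w) = 0 := by
        have hmat : (Xᵀ * Jn) * Z = Xᵀ * Jn := by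
          rw [hZ]
          calc (Xᵀ * Jn) * (X * ((Jm (Fin k))ᵀ * (Xᵀ * Jn)))
              = (Xᵀ * Jn * X) * ((Jm (Fin k))ᵀ * (Xᵀ * Jn)) := by
                simp only [Matrix.mul_assoc]
            _ = (Jm (Fin k) * (Jm (Fin k))ᵀ) * (Xᵀ * Jn) := by
                rw [hX]; simp only [Matrix.mul_assoc]
            _ = Xᵀ * Jn := by rw [Jm_mul_transpose, Matrix.one_mul]
        rw [Matrix.mulVec_sub]
        have e1 : (Xᵀ * Jn) *ᵥ (Z *ᵥ w) = (Xᵀ * Jn) *ᵥ w := by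
          rw [Matrix.mulVec_mulVec, hmat]
        rw [e1, sub_self]
      have h1 : u ⬝ᵥ (Jn *ᵥ (w - Z *ᵥ w)) = 0 := hcon _ hZker
      have h2 : u ⬝ᵥ (Jn *ᵥ (Z *ᵥ w)) = 0 := by
        have hvm : u ᵥ* (Jn * X) = 0 := by
          have : Jn * X = ((Jn * X)ᵀ)ᵀ := by rw [Matrix.transpose_transpose]
          rw [this, Matrix.vecMul_transpose, Matrix.transpose_mul, hJn, Jm_transpose]
          rw [Matrix.mul_neg, Matrix.neg_mulVec, ← hJn, hu, neg_zero]
        rw [Matrix.mulVec_mulVec, hZ, Matrix.dotProduct_mulVec]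
        have : Jn * (X * ((Jm (Fin k))ᵀ * (Xᵀ * Jn))) = (Jn * X) * ((Jm (Fin k))ᵀ * (Xᵀ * Jn)) := by
          simp only [Matrix.mul_assoc]
        rw [this, ← Matrix.vecMul_vecMul, hvm]
        simp
      have : u ⬝ᵥ (Jn *ᵥ w) = u ⬝ᵥ (Jn *ᵥ (w - Z *ᵥ w)) + u ⬝ᵥ (Jn *ᵥ (Z *ᵥ w)) := by
        rw [← dotProduct_add, ← Matrix.mulVec_add]
        congr 1
        ext i
        simp
      rw [this, h1, h2, add_zero]
    -- now u = 0, contradiction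
    apply hu0
    have hy : u ᵥ* Jn = 0 := by
      have := hall (u ᵥ* Jn)
      rw [Matrix.dotProduct_mulVec] at this
      exact dotProduct_self_eq_zero.mp this
    have : (u ᵥ* Jn) ᵥ* Jnᵀ = 0 := by rw [hy]; simp
    rw [Matrix.vecMul_vecMul, hJn, Jm_mul_transpose, Matrix.vecMul_one] at this
    exact this
  obtain ⟨v0, hv0K, hc⟩ := hv0
  set c0 := u ⬝ᵥ (Jn *ᵥ v0) with hc0
  set v : Fin n ⊕ Fin n → ℝ := c0⁻¹ • v0 with hv
  have hvK : (Xᵀ * Jn) *ᵥ v = 0 := by rw [hv, Matrix.mulVec_smul, hv0K, smul_zero]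
  have huv : u ⬝ᵥ (Jn *ᵥ v) = 1 := by
    rw [hv, Matrix.mulVec_smul, dotProduct_smul, smul_eq_mul, ← hc0, inv_mul_cancel₀ hc]
  -- build the extension
  set X' : Matrix (Fin n ⊕ Fin n) (Fin (k+1) ⊕ Fin (k+1)) ℝ := fun i c =>
    Sum.elim (fun j => Fin.lastCases (u i) (fun j' => X i (Sum.inl j')) j)
      (fun j => Fin.lastCases (v i) (fun j' => X i (Sum.inr j')) j) c with hX'
  have hcols : (∀ j, (fun i => X' i (Sum.inl (Fin.castSucc j))) = fun i => X i (Sum.inl j)) ∧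
      (∀ j, (fun i => X' i (Sum.inr (Fin.castSucc j))) = fun i => X i (Sum.inr j)) ∧
      ((fun i => X' i (Sum.inl (Fin.last k))) = u) ∧
      ((fun i => X' i (Sum.inr (Fin.last k))) = v) := by
    refine ⟨fun j => ?_, fun j => ?_, ?_, ?_⟩ <;> (ext i; simp [hX'])
  obtain ⟨hc1, hc2, hc3, hc4⟩ := hcols
  have hXg : ∀ c d, (fun i => X i c) ⬝ᵥ (Jn *ᵥ fun i => X i d) = Jm (Fin k) c d :=
    fun c d => by rw [← _root_.gram_apply, hX]
  have hxu : ∀ c, (fun i => X i c) ⬝ᵥ (Jn *ᵥ u) = 0 := hcol u hu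
  have hxv : ∀ c, (fun i => X i c) ⬝ᵥ (Jn *ᵥ v) = 0 := hcol v hvK
  have hux : ∀ c, u ⬝ᵥ (Jn *ᵥ fun i => X i c) = 0 := fun c => by
    rw [hJn, omega_skew, ← hJn, hxu c, neg_zero]
  have hvx : ∀ c, v ⬝ᵥ (Jn *ᵥ fun i => X i c) = 0 := fun c => by
    rw [hJn, omega_skew, ← hJn, hxv c, neg_zero]
  have hvu : v ⬝ᵥ (Jn *ᵥ u) = -1 := by
    rw [hJn, omega_skew, ← hJn, huv]
  refine ⟨X', ?_, ?_⟩
  · ext c d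
    rw [_root_.gram_apply]
    rcases c with c | c <;> rcases d with d | d
    · induction c using Fin.lastCases with
      | last =>
          induction d using Fin.lastCases with
          | last => rw [hc3, omega_self]; simp [Jm, Matrix.fromBlocks]
          | cast d => rw [hc3, hc1 d, hux (Sum.inl d)]; simp [Jm, Matrix.fromBlocks]
      | cast c =>
          induction d using Fin.lastCases with
          | last => rw [hc1 c, hc3, hxu (Sum.inl c)]; simp [Jm, Matrix.fromBlocks]
          | cast d =>
              rw [hc1 c, hc1 d, hXg (Sum.inl c) (Sum.inl d)]
              simp [Jm, Matrix.fromBlocks]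
    · induction c using Fin.lastCases with
      | last =>
          induction d using Fin.lastCases with
          | last => rw [hc3, hc4, huv]; simp [Jm, Matrix.fromBlocks, Matrix.one_apply]
          | cast d =>
              rw [hc3, hc2 d, hux (Sum.inr d)]
              simp [Jm, Matrix.fromBlocks, Matrix.one_apply,
                ((Fin.castSucc_lt_last d).ne').symm, (Fin.castSucc_lt_last d).ne']
      | cast c =>
          induction d using Fin.lastCases with
          | last =>
              rw [hc1 c, hc4, hxv (Sum.inl c)]
              simp [Jm, Matrix.fromBlocks, Matrix.one_apply, (Fin.castSucc_lt_last c).ne]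
          | cast d =>
              rw [hc1 c, hc2 d, hXg (Sum.inl c) (Sum.inr d)]
              simp [Jm, Matrix.fromBlocks, Matrix.one_apply, Fin.castSucc_inj]
    · induction c using Fin.lastCases with
      | last =>
          induction d using Fin.lastCases with
          | last => rw [hc4, hc3, hvu]; simp [Jm, Matrix.fromBlocks, Matrix.one_apply]
          | cast d =>
              rw [hc4, hc1 d, hvx (Sum.inl d)]
              simp [Jm, Matrix.fromBlocks, Matrix.one_apply, (Fin.castSucc_lt_last d).ne']
      | cast c =>
          induction d using Fin.lastCases with
          | last =>
              rw [hc2 c, hc3, hxu (Sum.inr c)]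
              simp [Jm, Matrix.fromBlocks, Matrix.one_apply, (Fin.castSucc_lt_last c).ne]
          | cast d =>
              rw [hc2 c, hc1 d, hXg (Sum.inr c) (Sum.inl d)]
              simp [Jm, Matrix.fromBlocks, Matrix.one_apply, Fin.castSucc_inj]
    · induction c using Fin.lastCases with
      | last =>
          induction d using Fin.lastCases with
          | last => rw [hc4, omega_self]; simp [Jm, Matrix.fromBlocks]
          | cast d => rw [hc4, hc2 d, hvx (Sum.inr d)]; simp [Jm, Matrix.fromBlocks]
      | cast c =>
          induction d using Fin.lastCases with
          | last => rw [hc2 c, hc4, hxv (Sum.inr c)]; simp [Jm, Matrix.fromBlocks]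
          | cast d =>
              rw [hc2 c, hc2 d, hXg (Sum.inr c) (Sum.inr d)]
              simp [Jm, Matrix.fromBlocks]
  · intro i c
    rcases c with j | j <;> simp [hX']

lemma exists_completion : ∀ (d n k : ℕ) (hkn : k ≤ n), n = k + d →
    ∀ X : Matrix (Fin n ⊕ Fin n) (Fin k ⊕ Fin k) ℝ, Xᵀ * Jm (Fin n) * X = Jm (Fin k) →
    ∃ S : Matrix (Fin n ⊕ Fin n) (Fin n ⊕ Fin n) ℝ, IsSymplectic S ∧
      ∀ i c, S i (Sum.map (Fin.castLE hkn) (Fin.castLE hkn) c) = X i c := by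
  intro d
  induction d with
  | zero =>
      intro n k hkn hd X hX
      have h : n = k := by omega
      subst h
      refine ⟨X, hX, fun i c => ?_⟩
      have : Sum.map (Fin.castLE hkn) (Fin.castLE hkn) c = c := by
        rcases c with j | j <;> simp [Sum.map, Fin.ext_iff]
      rw [this]
  | succ d ih =>
      intro n k hkn hd X hX
      have hk : k < n := by omega
      obtain ⟨X', hX', hcomp⟩ := completion_step hk X hX
      obtain ⟨S, hS, hScomp⟩ := ih n (k + 1) (by omega) (by omega) X' hX'
      refine ⟨S, hS, fun i c => ?_⟩
      have hmap : Sum.map (Fin.castLE hkn) (Fin.castLE hkn) c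
          = Sum.map (Fin.castLE (by omega : k + 1 ≤ n)) (Fin.castLE (by omega : k + 1 ≤ n))
            (Sum.map Fin.castSucc Fin.castSucc c) := by
        rcases c with j | j <;> simp [Sum.map, Fin.ext_iff]
      rw [hmap, hScomp, hcomp]

end Aux

section Main

theorem schur_iff_kyfan (M : ℝ → ℝ → ℝ) (hM : IsGenMean M) :
    (∀ (n : ℕ) (A W : Matrix (Fin n ⊕ Fin n) (Fin n ⊕ Fin n) ℝ) (δ : Fin n → ℝ),
        A.PosDef → (∀ j, 0 < δ j) → Monotone δ → IsSymplectic W →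
        Wᵀ * A * W = Matrix.fromBlocks (Matrix.diagonal δ) 0 0 (Matrix.diagonal δ) →
        SupermajW (fun j => M (A (Sum.inl j) (Sum.inl j)) (A (Sum.inr j) (Sum.inr j))) δ)
    ↔
    (∀ (n : ℕ) (A W : Matrix (Fin n ⊕ Fin n) (Fin n ⊕ Fin n) ℝ) (δ : Fin n → ℝ),
        A.PosDef → (∀ j, 0 < δ j) → Monotone δ → IsSymplectic W →
        Wᵀ * A * W = Matrix.fromBlocks (Matrix.diagonal δ) 0 0 (Matrix.diagonal δ) →
        ∀ k : ℕ, k ≤ n →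
          IsLeast
            {t : ℝ | ∃ X : Matrix (Fin n ⊕ Fin n) (Fin k ⊕ Fin k) ℝ,
              Xᵀ * Jm (Fin n) * X = Jm (Fin k) ∧
              t = ∑ j : Fin k,
                M ((Xᵀ * A * X) (Sum.inl j) (Sum.inl j)) ((Xᵀ * A * X) (Sum.inr j) (Sum.inr j))}
            (∑ j ∈ Finset.univ.filter (fun j : Fin n => (j : ℕ) < k), δ j)) := by
  constructor
  · -- Schur-type supermajorization implies the Ky Fan-type minimum principle
    intro h1 n A W δ hA hδ hδm hW hWA k hk
    constructor
    · -- membership : restrict W to the first k symplectic pairs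
      refine ⟨W * selMat (Fin.castLE hk), ?_, ?_⟩
      · have h : (W * selMat (Fin.castLE hk))ᵀ * Jm (Fin n) * (W * selMat (Fin.castLE hk))
            = (selMat (Fin.castLE hk))ᵀ * (Wᵀ * Jm (Fin n) * W) * selMat (Fin.castLE hk) := by
          simp only [Matrix.transpose_mul, Matrix.mul_assoc]
        rw [h, hW, selMat_J (Fin.castLE_injective hk)]
      · have hB : (W * selMat (Fin.castLE hk))ᵀ * A * (W * selMat (Fin.castLE hk))
            = (selMat (Fin.castLE hk))ᵀ * (Wᵀ * A * W) * selMat (Fin.castLE hk) := by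
          simp only [Matrix.transpose_mul, Matrix.mul_assoc]
        rw [hB, hWA, sum_filter_lt hk δ]
        refine Finset.sum_congr rfl fun j _ => ?_
        rw [selMat_gram, selMat_gram]
        simp only [Sum.map_inl, Sum.map_inr, Matrix.fromBlocks_apply₁₁,
          Matrix.fromBlocks_apply₂₂, Matrix.diagonal_apply_eq]
        have hb := hM.between (δ (Fin.castLE hk j)) (δ (Fin.castLE hk j))
          (hδ _) le_rfl
        linarith [hb.1, hb.2]
    · -- lower bound
      rintro t ⟨X, hXJ, rfl⟩
      obtain ⟨S, hS, hScomp⟩ := exists_completion (n - k) n k hk (by omega) X hXJ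
      obtain ⟨L, hLS, hSL, hLsym⟩ := symplectic_inv hS
      have hSinj : ∀ y : Fin n ⊕ Fin n → ℝ, S *ᵥ y = 0 → y = 0 := by
        intro y hy
        have : (L * S) *ᵥ y = L *ᵥ (S *ᵥ y) := by rw [Matrix.mulVec_mulVec]
        rw [hLS, Matrix.one_mulVec, hy, Matrix.mulVec_zero] at this
        exact this
      have hC : (Sᵀ * A * S).PosDef := posDef_conj hA hSinj
      have hWC : IsSymplectic (L * W) := symplectic_mul hLsym hW
      have h1' : Lᵀ * Sᵀ = 1 := by rw [← Matrix.transpose_mul, hSL, Matrix.transpose_one]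
      have h2' : S * (L * W) = W := by rw [← Matrix.mul_assoc, hSL, Matrix.one_mul]
      have hWCA : (L * W)ᵀ * (Sᵀ * A * S) * (L * W)
          = Matrix.fromBlocks (Matrix.diagonal δ) 0 0 (Matrix.diagonal δ) := by
        have e : (L * W)ᵀ * (Sᵀ * A * S) * (L * W)
            = Wᵀ * ((Lᵀ * Sᵀ) * (A * (S * (L * W)))) := by
          simp only [Matrix.transpose_mul, Matrix.mul_assoc]
        rw [e, h1', Matrix.one_mul, h2', ← Matrix.mul_assoc, hWA]
      have hmaj := h1 n (Sᵀ * A * S) (L * W) δ hC hδ hδm hWC hWCA k hk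
      set x : Fin n → ℝ := fun j =>
        M ((Sᵀ * A * S) (Sum.inl j) (Sum.inl j)) ((Sᵀ * A * S) (Sum.inr j) (Sum.inr j)) with hx
      have key : ∀ c d : Fin k ⊕ Fin k,
          (Sᵀ * A * S) (Sum.map (Fin.castLE hk) (Fin.castLE hk) c)
            (Sum.map (Fin.castLE hk) (Fin.castLE hk) d) = (Xᵀ * A * X) c d := by
        intro c d
        rw [_root_.gram_apply, _root_.gram_apply]
        have e1 : (fun i => S i (Sum.map (Fin.castLE hk) (Fin.castLE hk) c))
            = fun i => X i c := funext fun i => hScomp i c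
        have e2 : (fun i => S i (Sum.map (Fin.castLE hk) (Fin.castLE hk) d))
            = fun i => X i d := funext fun i => hScomp i d
        rw [e1, e2]
      have hxval : ∀ j : Fin k, x (Fin.castLE hk j)
          = M ((Xᵀ * A * X) (Sum.inl j) (Sum.inl j)) ((Xᵀ * A * X) (Sum.inr j) (Sum.inr j)) := by
        intro j
        have k1 := key (Sum.inl j) (Sum.inl j)
        have k2 := key (Sum.inr j) (Sum.inr j)
        simp only [Sum.map_inl, Sum.map_inr] at k1 k2
        rw [hx]
        simp only [k1, k2]
      set T : Finset (Fin n) := Finset.univ.image (Fin.castLE hk) with hT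
      have hTcard : T.card = k := by
        rw [hT, Finset.card_image_of_injective _ (Fin.castLE_injective hk), Finset.card_univ,
          Fintype.card_fin]
      calc ∑ j ∈ Finset.univ.filter (fun j : Fin n => (j : ℕ) < k), δ j
          = ∑ j ∈ Finset.univ.filter (fun j : Fin n => (j : ℕ) < k), δ (Tuple.sort δ j) :=
            Finset.sum_congr rfl fun j _ => (sorted_eq_of_monotone hδm j).symm
        _ ≤ ∑ j ∈ Finset.univ.filter (fun j : Fin n => (j : ℕ) < k), x (Tuple.sort x j) :=
            hmaj
        _ ≤ ∑ t ∈ T, x t := sum_smallest_le x T hTcard hk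
        _ = ∑ j : Fin k, x (Fin.castLE hk j) := by
            rw [hT, Finset.sum_image (fun a _ b _ h => Fin.castLE_injective hk h)]
        _ = ∑ j : Fin k, M ((Xᵀ * A * X) (Sum.inl j) (Sum.inl j))
              ((Xᵀ * A * X) (Sum.inr j) (Sum.inr j)) :=
            Finset.sum_congr rfl fun j _ => hxval j
  · -- Ky Fan-type minimum principle implies Schur-type supermajorization
    intro h2 n A W δ hA hδ hδm hW hWA k hk
    set x : Fin n → ℝ := fun j =>
      M (A (Sum.inl j) (Sum.inl j)) (A (Sum.inr j) (Sum.inr j)) with hx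
    set σ := Tuple.sort x with hσ
    set T : Finset (Fin n) := (Finset.univ.filter (fun j : Fin n => (j : ℕ) < k)).image σ
      with hT
    have hTcard : T.card = k := by
      rw [hT, Finset.card_image_of_injective _ σ.injective, card_filter_lt hk]
    set φ : Fin k → Fin n := fun i => ((T.orderIsoOfFin hTcard i) : Fin n) with hφ
    have hφsm : StrictMono φ := fun a b hab => (T.orderIsoOfFin hTcard).strictMono hab
    have hφinj : Function.Injective φ := hφsm.injective
    have hIsLeast := h2 n A W δ hA hδ hδm hW hWA k hk
    have hmem : (∑ j : Fin k,
        M (((selMat φ)ᵀ * A * selMat φ) (Sum.inl j) (Sum.inl j))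
          (((selMat φ)ᵀ * A * selMat φ) (Sum.inr j) (Sum.inr j))) ∈
        {t : ℝ | ∃ X : Matrix (Fin n ⊕ Fin n) (Fin k ⊕ Fin k) ℝ,
          Xᵀ * Jm (Fin n) * X = Jm (Fin k) ∧
          t = ∑ j : Fin k,
            M ((Xᵀ * A * X) (Sum.inl j) (Sum.inl j)) ((Xᵀ * A * X) (Sum.inr j) (Sum.inr j))} :=
      ⟨selMat φ, selMat_J hφinj, rfl⟩
    have hlb := hIsLeast.2 hmem
    have hval : ∑ j : Fin k,
        M (((selMat φ)ᵀ * A * selMat φ) (Sum.inl j) (Sum.inl j))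
          (((selMat φ)ᵀ * A * selMat φ) (Sum.inr j) (Sum.inr j)) = ∑ j : Fin k, x (φ j) := by
      refine Finset.sum_congr rfl fun j _ => ?_
      rw [selMat_gram, selMat_gram]
      simp only [Sum.map_inl, Sum.map_inr]
      rfl
    have hsumT : ∑ j : Fin k, x (φ j) = ∑ t ∈ T, x t := by
      rw [← Finset.sum_attach T x]
      exact Equiv.sum_comp (T.orderIsoOfFin hTcard).toEquiv (fun a => x (a : Fin n))
    have hsumfil : ∑ t ∈ T, x t
        = ∑ j ∈ Finset.univ.filter (fun j : Fin n => (j : ℕ) < k), x (σ j) := by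
      rw [hT, Finset.sum_image (fun a _ b _ h => σ.injective h)]
    calc ∑ j ∈ Finset.univ.filter (fun j : Fin n => (j : ℕ) < k), δ (Tuple.sort δ j)
        = ∑ j ∈ Finset.univ.filter (fun j : Fin n => (j : ℕ) < k), δ j :=
          Finset.sum_congr rfl fun j _ => sorted_eq_of_monotone hδm j
      _ ≤ ∑ j : Fin k,
            M (((selMat φ)ᵀ * A * selMat φ) (Sum.inl j) (Sum.inl j))
              (((selMat φ)ᵀ * A * selMat φ) (Sum.inr j) (Sum.inr j)) := hlb
      _ = ∑ j ∈ Finset.univ.filter (fun j : Fin n => (j : ℕ) < k), x (Tuple.sort x j) := by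
          rw [hval, hsumT, hsumfil]

end Main
end
end

section
/- Let A ∈ M_{2n}(ℝ) be positive definite with 2×2 block form [[A₁₁, A₁₂],[A₁₂ᵀ, A₂₂]], and let α_j, β_j, γ_j be the j-th diagonal entries of A₁₁, A₁₂, A₂₂ respectively. Then the s-pinching C^s(A) = ⊞_{j=1}^n [[α_j, β_j],[β_j, γ_j]] is positive definite and its symplectic eigenvalues are √(α_j γ_j − β_j²) for j = 1,…,n. -/
open Matrix Finset

noncomputable section

open Polynomial in
lemma charmatrix_blockDiagonal' {R m ι : Type*} [CommRing R] [DecidableEq m] [Fintype m]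
    [DecidableEq ι] [Fintype ι] (d : ι → Matrix m m R) :
    charmatrix (blockDiagonal d) = blockDiagonal (fun k => charmatrix (d k)) := by
  ext ⟨i, k⟩ ⟨j, k'⟩
  by_cases h : k = k'
  · subst h
    by_cases h2 : i = j
    · subst h2; simp [blockDiagonal_apply]
    · rw [charmatrix_apply_ne _ _ _ (by simp [h2] : ((i,k) : m × ι) ≠ (j,k))]
      simp [blockDiagonal_apply, charmatrix_apply_ne _ _ _ h2]
  · rw [charmatrix_apply_ne _ _ _ (by simp [h] : ((i,k) : m × ι) ≠ (j,k'))]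
    simp [blockDiagonal_apply, h]

lemma charpoly_blockDiagonal' {R m ι : Type*} [CommRing R] [DecidableEq m] [Fintype m]
    [DecidableEq ι] [Fintype ι] (d : ι → Matrix m m R) :
    (blockDiagonal d).charpoly = ∏ k, (d k).charpoly := by
  rw [Matrix.charpoly, charmatrix_blockDiagonal', det_blockDiagonal]
  rfl

/-- The reindexing equivalence matching `blockDiagonal` indices with `Fin n ⊕ Fin n`. -/
def pe (n : ℕ) : Fin 2 × Fin n ≃ (Fin n ⊕ Fin n) where
  toFun p := if p.1 = 0 then Sum.inl p.2 else Sum.inr p.2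
  invFun s := Sum.elim (fun j => ((0 : Fin 2), j)) (fun j => ((1 : Fin 2), j)) s
  left_inv p := by rcases p with ⟨k, j⟩; fin_cases k <;> simp
  right_inv s := by rcases s with j | j <;> simp

open Polynomial in
lemma charpoly_two' (a b c : ℂ) :
    (!![b, c; -a, -b] : Matrix (Fin 2) (Fin 2) ℂ).charpoly = X^2 + Polynomial.C (a*c - b^2) := by
  have h : charmatrix (!![b, c; -a, -b] : Matrix (Fin 2) (Fin 2) ℂ) =
      !![X - Polynomial.C b, -Polynomial.C c; Polynomial.C a, X + Polynomial.C b] := by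
    ext i j
    fin_cases i <;> fin_cases j <;>
      simp [charmatrix_apply_eq, charmatrix_apply_ne]
  rw [Matrix.charpoly, h, det_fin_two_of]
  simp only [map_sub, _root_.map_mul, map_pow]
  ring

open Polynomial in
lemma roots_sq_add' (r : ℝ) (hr : 0 ≤ r) :
    (X^2 + Polynomial.C ((r : ℂ))).roots =
      {(Real.sqrt r : ℂ) * Complex.I} + {-((Real.sqrt r : ℂ) * Complex.I)} := by
  set a : ℂ := (Real.sqrt r : ℂ) * Complex.I with ha'
  have ha : a ^ 2 = -(r : ℂ) := by
    rw [ha', mul_pow, Complex.I_sq, ← Complex.ofReal_pow, Real.sq_sqrt hr]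
    ring
  have hfac : X^2 + Polynomial.C ((r : ℂ)) = (X - Polynomial.C a) * (X - Polynomial.C (-a)) := by
    rw [map_neg, sub_neg_eq_add]
    have h2 : (X - Polynomial.C a) * (X + Polynomial.C a) = X^2 - Polynomial.C a ^ 2 := by ring
    rw [h2, ← map_pow, ha, map_neg, sub_neg_eq_add]
  rw [hfac, roots_mul (mul_ne_zero (X_sub_C_ne_zero a) (X_sub_C_ne_zero (-a))),
    roots_X_sub_C, roots_X_sub_C]

theorem pinching_symplectic_eigenvalues {n : ℕ}
    (A : Matrix (Fin n ⊕ Fin n) (Fin n ⊕ Fin n) ℝ) (hA : A.PosDef) :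
    let α : Fin n → ℝ := fun j => A (Sum.inl j) (Sum.inl j)
    let β : Fin n → ℝ := fun j => A (Sum.inl j) (Sum.inr j)
    let γ : Fin n → ℝ := fun j => A (Sum.inr j) (Sum.inr j)
    let C : Matrix (Fin n ⊕ Fin n) (Fin n ⊕ Fin n) ℝ :=
      Matrix.fromBlocks (Matrix.diagonal α) (Matrix.diagonal β)
        (Matrix.diagonal β) (Matrix.diagonal γ)
    C.PosDef ∧
    ((Jm (Fin n) * C).map (Complex.ofReal ·)).charpoly.roots =
      (Finset.univ.val.map fun j => (Real.sqrt (α j * γ j - β j ^ 2) : ℂ) * Complex.I) +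
      (Finset.univ.val.map fun j => -((Real.sqrt (α j * γ j - β j ^ 2) : ℂ) * Complex.I)) := by
  intro α β γ C
  have hsym : ∀ j, A (Sum.inr j) (Sum.inl j) = β j := by
    intro j
    have := hA.1.apply (Sum.inr j) (Sum.inl j)
    simpa using this.symm
  have key : ∀ j, ∀ u v : ℝ, ¬(u = 0 ∧ v = 0) →
      0 < α j * u^2 + 2 * β j * (u*v) + γ j * v^2 := by
    intro j u v huv
    set x : (Fin n ⊕ Fin n) → ℝ := Sum.elim (Pi.single j u) (Pi.single j v) with hx
    have hxl : x (Sum.inl j) = u := by simp [hx]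
    have hxr : x (Sum.inr j) = v := by simp [hx]
    have hx0 : x ≠ 0 := by
      intro h0
      apply huv
      constructor
      · rw [← hxl, h0]; rfl
      · rw [← hxr, h0]; rfl
    have hpos := hA.dotProduct_mulVec_pos hx0
    rw [star_trivial] at hpos
    have hdp : x ⬝ᵥ A *ᵥ x =
        u * (A (Sum.inl j) (Sum.inl j) * u) + u * (A (Sum.inl j) (Sum.inr j) * v) +
        (v * (A (Sum.inr j) (Sum.inl j) * u) + v * (A (Sum.inr j) (Sum.inr j) * v)) := by
      simp [hx, dotProduct, mulVec, Fintype.sum_sum_type, Pi.single_apply, ite_mul, mul_ite,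
        mul_zero, zero_mul, Finset.sum_ite_eq', Finset.sum_ite_eq]
      ring
    rw [hdp, hsym j] at hpos
    show 0 < _
    calc (0:ℝ) < _ := hpos
    _ = α j * u^2 + 2 * β j * (u*v) + γ j * v^2 := by simp only [α, β, γ]; ring
  have halpha : ∀ j, 0 < α j := by
    intro j
    have := key j 1 0 (by simp)
    simpa using this
  have hdet : ∀ j, 0 < α j * γ j - β j ^ 2 := by
    intro j
    have h := key j (-(β j)) (α j) (by intro h; exact absurd h.2 (ne_of_gt (halpha j)))
    nlinarith [halpha j]
  constructor
  · refine Matrix.PosDef.of_dotProduct_mulVec_pos ?_ ?_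
    · show Cᴴ = C
      simp [C, fromBlocks_conjTranspose, diagonal_conjTranspose, fromBlocks_transpose,
        diagonal_transpose]
    · intro x hx
      rw [star_trivial]
      have hq : x ⬝ᵥ C *ᵥ x = ∑ j, (α j * (x (Sum.inl j))^2 +
          2 * β j * (x (Sum.inl j) * x (Sum.inr j)) + γ j * (x (Sum.inr j))^2) := by
        simp only [C, dotProduct, mulVec, Fintype.sum_sum_type, fromBlocks_apply₁₁,
          fromBlocks_apply₁₂, fromBlocks_apply₂₁, fromBlocks_apply₂₂, diagonal_apply, ite_mul,
          mul_ite, mul_zero, zero_mul, Finset.sum_ite_eq', Finset.sum_ite_eq, Finset.mem_univ,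
          if_true]
        rw [← Finset.sum_add_distrib]
        exact Finset.sum_congr rfl (fun j _ => by ring)
      rw [hq]
      obtain ⟨i, hi⟩ : ∃ i, x i ≠ 0 := by
        by_contra h; push_neg at h; exact hx (funext h)
      refine Finset.sum_pos' (fun j _ => ?_) ?_
      · nlinarith [sq_nonneg (α j * x (Sum.inl j) + β j * x (Sum.inr j)),
          sq_nonneg (x (Sum.inr j)), halpha j, hdet j,
          mul_nonneg (le_of_lt (hdet j)) (sq_nonneg (x (Sum.inr j)))]
      · rcases i with j | j
        · exact ⟨j, mem_univ j, key j _ _ (fun h => hi h.1)⟩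
        · exact ⟨j, mem_univ j, key j _ _ (fun h => hi h.2)⟩
  · have h1 : Jm (Fin n) * C = fromBlocks (diagonal β) (diagonal γ)
        (-(diagonal α)) (-(diagonal β)) := by
      simp [Jm, C, fromBlocks_multiply]
    set d : Fin n → Matrix (Fin 2) (Fin 2) ℂ :=
      fun j => !![(β j : ℂ), (γ j : ℂ); -(α j : ℂ), -(β j : ℂ)] with hd
    have h2 : (Jm (Fin n) * C).map (Complex.ofReal ·) =
        reindex (pe n) (pe n) (blockDiagonal d) := by
      rw [h1]
      ext i j
      rcases i with i | i <;> rcases j with j | j <;>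
        by_cases h : i = j <;>
        simp [pe, hd, blockDiagonal_apply, diagonal_apply, reindex_apply, submatrix_apply,
          map_apply, h]
    rw [h2, charpoly_reindex, charpoly_blockDiagonal']
    have h4 : ∀ j ∈ Finset.univ (α := Fin n), (d j).charpoly =
        Polynomial.X^2 + Polynomial.C (((α j * γ j - β j^2 : ℝ) : ℂ)) := by
      intro j _
      rw [hd]
      rw [charpoly_two']
      congr 1
      push_cast
      ring
    rw [Finset.prod_congr rfl h4]
    rw [Polynomial.roots_prod _ _ (Finset.prod_ne_zero_iff.mpr (fun j _ =>
      (Polynomial.monic_X_pow_add_C _ two_ne_zero).ne_zero))]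
    have h5 : ∀ j, (Polynomial.X^2 + Polynomial.C (((α j * γ j - β j^2 : ℝ) : ℂ))).roots =
        {(Real.sqrt (α j * γ j - β j^2) : ℂ) * Complex.I} +
        {-((Real.sqrt (α j * γ j - β j^2) : ℂ) * Complex.I)} :=
      fun j => roots_sq_add' _ (le_of_lt (hdet j))
    simp only [h5]
    rw [Multiset.bind_add, Multiset.bind_singleton, Multiset.bind_singleton]
end
end
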